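/- Let λ₁, λ₂ > 0, f₁ > 0, f₂ < 0, 0 < ρ ≤ f₁ with Φ(ρ) > 0, K > 0. With x* = ((ρ+λ₁-f₁)/(ρ+λ₁))·(Kβ₂/(β₂-1)), A₀ = λ₁/(ρ+λ₁-f₁), B₀ = -λ₁K/(ρ+λ₁), and A₂ = (A₀x* + B₀)/(x*)^{β₂}, the smooth-fit condition β₂A₂(x*)^{β₂-1} = A₀ holds, i.e., the function v(x,1) defined as A₂x^{β₂} for x ≤ x* and A₀x + B₀ for x > x* is differentiable at x = x*. -/

import Mathlib

set_option maxHeartbeats 1000000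


theorem smooth_fit_state1
    (l1 l2 f1 f2 ρ K : ℝ)
    (hl1 : 0 < l1) (hl2 : 0 < l2) (hf1 : 0 < f1) (hf2 : f2 < 0)
    (hρ : 0 < ρ) (hρf1 : ρ ≤ f1) (hK : 0 < K)
    (hΦ : (ρ + l1 - f1) * (ρ + l2 - f2) - l1 * l2 > 0)
    (D1 D2 β2 A0 B0 xstar A2 : ℝ)
    (hD1 : D1 = (ρ + l1) * f2 + (ρ + l2) * f1)
    (hD2 : D2 = (ρ + l1) * (ρ + l2) - l1 * l2)
    (hβ2 : β2 = (D1 - Real.sqrt (D1 ^ 2 - 4 * f1 * f2 * D2)) / (2 * f1 * f2))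
    (hA0 : A0 = l1 / (ρ + l1 - f1))
    (hB0 : B0 = -(l1 * K) / (ρ + l1))
    (hx : xstar = ((ρ + l1 - f1) / (ρ + l1)) * (K * β2 / (β2 - 1)))
    (hA2 : A2 = (A0 * xstar + B0) / xstar ^ β2) :
    β2 * A2 * xstar ^ (β2 - 1) = A0 ∧
    DifferentiableAt ℝ
      (fun x : ℝ => if x ≤ xstar then A2 * x ^ β2 else A0 * x + B0) xstar := by
  have hb : 0 < ρ + l1 := by linarith
  have hf2' : 0 < ρ + l2 - f2 := by linarith
  have ha : 0 < ρ + l1 - f1 := by nlinarith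
  have hc : f1 * f2 < 0 := mul_neg_of_pos_of_neg hf1 hf2
  have hD2pos : 0 < D2 := by rw [hD2]; nlinarith
  set disc := D1 ^ 2 - 4 * f1 * f2 * D2 with hdiscdef
  have hdisc : 0 < disc := by
    have h4 : 0 < (-(f1 * f2)) * D2 := mul_pos (by linarith) hD2pos
    nlinarith [sq_nonneg D1]
  set s := Real.sqrt disc with hsdef
  have hs0 : 0 ≤ s := Real.sqrt_nonneg _
  have hs2 : s ^ 2 = disc := Real.sq_sqrt hdisc.le
  have hΦ' : f1 * f2 - D1 + D2 > 0 := by rw [hD1, hD2]; nlinarith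
  have hsq : (D1 - 2 * f1 * f2) ^ 2 < s ^ 2 := by
    rw [hs2, hdiscdef]; nlinarith
  have hslt : D1 - 2 * f1 * f2 < s :=
    lt_of_pow_lt_pow_left₀ 2 hs0 hsq
  have hcneg : 2 * f1 * f2 < 0 := by nlinarith
  have hβ2gt1 : 1 < β2 := by
    rw [hβ2, lt_div_iff_of_neg hcneg]
    linarith
  have hβ2pos : 0 < β2 := by linarith
  have hβ1pos : 0 < β2 - 1 := by linarith
  have hxpos : 0 < xstar := by
    rw [hx]
    exact mul_pos (div_pos ha hb) (div_pos (mul_pos hK hβ2pos) hβ1pos)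
  have hxβpos : 0 < xstar ^ β2 := Real.rpow_pos_of_pos hxpos β2
  -- key algebraic identity
  have hkey : β2 * (A0 * xstar + B0) = A0 * xstar := by
    rw [hA0, hB0, hx]
    field_simp
    ring
  have hsf : β2 * A2 * xstar ^ (β2 - 1) = A0 := by
    rw [hA2, Real.rpow_sub_one hxpos.ne']
    field_simp
    nlinarith [hkey]
  refine ⟨hsf, ?_⟩
  have hcont : A2 * xstar ^ β2 = A0 * xstar + B0 := by
    rw [hA2]; field_simp
  have hd1 : HasDerivAt (fun x : ℝ => A2 * x ^ β2) A0 xstar := by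
    have h := (Real.hasDerivAt_rpow_const (p := β2) (Or.inl hxpos.ne')).const_mul A2
    have hval : A2 * (β2 * xstar ^ (β2 - 1)) = A0 := by rw [← hsf]; ring
    rw [hval] at h; exact h
  have hd2 : HasDerivAt (fun x : ℝ => A0 * x + B0) A0 xstar := by
    have h := ((hasDerivAt_id xstar).const_mul A0).add_const B0
    simpa using h
  set f := fun x : ℝ => if x ≤ xstar then A2 * x ^ β2 else A0 * x + B0 with hf
  have e1 : Set.EqOn f (fun x : ℝ => A2 * x ^ β2) (Set.Iic xstar) := fun x hx => if_pos hx
  have e2 : Set.EqOn f (fun x : ℝ => A0 * x + B0) (Set.Ici xstar) := by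
    intro x hx
    by_cases h : x = xstar
    · subst h; simp only [hf, le_refl, if_pos]; exact hcont
    · exact if_neg (fun hle => h (le_antisymm hle hx))
  have h1 : HasDerivWithinAt f A0 (Set.Iic xstar) xstar :=
    hd1.hasDerivWithinAt.congr e1 (e1 (le_refl xstar))
  have h2 : HasDerivWithinAt f A0 (Set.Ici xstar) xstar :=
    hd2.hasDerivWithinAt.congr e2 (e2 (le_refl xstar))
  have h3 := h1.union h2
  rw [Set.Iic_union_Ici, hasDerivWithinAt_univ] at h3
  exact h3.differentiableAt
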